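/- Focusing completeness: for any derivation f of a sequent S ∣ Γ ⟶ C in the skew monoidal sequent calculus, there is a focused derivation focus f of S ∣ Γ ⟶_L C in the focused sequent calculus. -/
import Mathlib


set_option linter.unusedVariables false
inductive Fma (V : Type) : Type
  | var : V → Fma V
  | unit : Fma V
  | tens : Fma V → Fma V → Fma V

abbrev Stp (V : Type) := Option (Fma V)

def stpF {V : Type} : Stp V → Fma V
  | none => Fma.unit
  | some A => A

def semF {V : Type} : Fma V → List (Fma V) → Fma V
  | A, [] => A
  | A, B :: Γ => semF (A.tens B) Γ

abbrev sem {V : Type} (S : Stp V) (Γ : List (Fma V)) : Fma V := semF (stpF S) Γ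

theorem semF_append {V : Type} (A : Fma V) (Γ Δ : List (Fma V)) :
    semF A (Γ ++ Δ) = semF (semF A Γ) Δ := by
  induction Γ generalizing A with
  | nil => rfl
  | cons B Γ ih => exact ih _

/-- The skew monoidal sequent calculus (with the two cut rules). -/
inductive SeqD {V : Type} : Stp V → List (Fma V) → Fma V → Type
  | ax : SeqD (some A) [] A
  | uf : SeqD (some A) Γ C → SeqD none (A :: Γ) C
  | Il : SeqD none Γ C → SeqD (some Fma.unit) Γ C
  | Ir : SeqD none [] Fma.unit
  | tl : SeqD (some A) (B :: Γ) C → SeqD (some (Fma.tens A B)) Γ C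
  | tr : SeqD S Γ A → SeqD none Δ B → SeqD S (Γ ++ Δ) (Fma.tens A B)
  | scut : SeqD S Γ A → SeqD (some A) Δ C → SeqD S (Γ ++ Δ) C
  | ccut : SeqD none Γ A → SeqD S (Δ₀ ++ A :: Δ₁) C → SeqD S ((Δ₀ ++ Γ) ++ Δ₁) C

mutual
inductive FocL {V : Type} : Stp V → List (Fma V) → Fma V → Type
  | uf : FocL (some A) Γ C → FocL none (A :: Γ) C
  | Il : FocL none Γ C → FocL (some Fma.unit) Γ C
  | tl : FocL (some A) (B :: Γ) C → FocL (some (Fma.tens A B)) Γ C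
  | sw : FocR T Γ C → FocL T Γ C

inductive FocR {V : Type} : Stp V → List (Fma V) → Fma V → Type
  | ax : FocR (some (Fma.var X)) [] (Fma.var X)
  | Ir : FocR none [] Fma.unit
  | tr : FocR T Γ A → FocL none Δ B → FocR T (Γ ++ Δ) (Fma.tens A B)
end

/-- Admissible tensor-right rule in the L phase. -/
def tensRAdm {V : Type} {S : Stp V} {Γ Δ : List (Fma V)} {A B : Fma V}
    (f : FocL S Γ A) (g : FocL none Δ B) : FocL S (Γ ++ Δ) (Fma.tens A B) :=
  match f with
  | FocL.uf f' => FocL.uf (tensRAdm f' g)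
  | FocL.Il f' => FocL.Il (tensRAdm f' g)
  | FocL.tl f' => FocL.tl (tensRAdm f' g)
  | FocL.sw r => FocL.sw (FocR.tr r g)

/-- Admissible axiom. -/
def axAdm {V : Type} : (A : Fma V) → FocL (some A) [] A
  | Fma.var _ => FocL.sw FocR.ax
  | Fma.unit => FocL.Il (FocL.sw FocR.Ir)
  | Fma.tens A B => FocL.tl (tensRAdm (axAdm A) (FocL.uf (axAdm B)))

mutual
/-- Height of a focused derivation (L phase). -/
def hL {V : Type} {S : Stp V} {Γ : List (Fma V)} {C : Fma V} : FocL S Γ C → Nat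
  | FocL.uf f => hL f + 1
  | FocL.Il f => hL f + 1
  | FocL.tl f => hL f + 1
  | FocL.sw r => hR r + 1

/-- Height of a focused derivation (R phase). -/
def hR {V : Type} {T : Stp V} {Γ : List (Fma V)} {C : Fma V} : FocR T Γ C → Nat
  | FocR.ax => 0
  | FocR.Ir => 0
  | FocR.tr r g => hR r + hL g + 1
end

/-- Height-preserving cast. -/
def castStoup {V : Type} {A A' : Fma V} {Γ Γ' : List (Fma V)} {C : Fma V}
    (hA : A = A') (hΓ : Γ = Γ') (g : FocL (some A) Γ C) :
    {g' : FocL (some A') Γ' C // hL g' = hL g} := by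
  subst hA; subst hΓ; exact ⟨g, rfl⟩

/-- In the R phase, a nonempty stoup must be atomic. -/
theorem focR_stoup_var {V : Type} {A : Fma V} {Γ : List (Fma V)} {C : Fma V} :
    FocR (some A) Γ C → ∃ X, A = Fma.var X
  | FocR.ax => ⟨_, rfl⟩
  | FocR.tr r₁ _ => focR_stoup_var r₁

theorem splitList {V : Type} :
    ∀ (Γ₁ Δ₂ Δ₀ : List (Fma V)) (A : Fma V) (Δ₁ : List (Fma V)),
    Γ₁ ++ Δ₂ = Δ₀ ++ A :: Δ₁ →
    (∃ l, Γ₁ = Δ₀ ++ A :: l ∧ Δ₁ = l ++ Δ₂) ∨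
    (∃ l, Δ₀ = Γ₁ ++ l ∧ Δ₂ = l ++ A :: Δ₁) := by
  intro Γ₁
  induction Γ₁ with
  | nil => intro Δ₂ Δ₀ A Δ₁ h; exact Or.inr ⟨Δ₀, rfl, h⟩
  | cons x Γ₁' ih =>
    intro Δ₂ Δ₀ A Δ₁ h
    cases Δ₀ with
    | nil =>
      simp only [List.nil_append, List.cons_append, List.cons.injEq] at h
      exact Or.inl ⟨Γ₁', by simp [h.1], h.2.symm⟩
    | cons y Δ₀' =>
      simp only [List.cons_append, List.cons.injEq] at h
      obtain ⟨rfl, h2⟩ := h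
      rcases ih Δ₂ Δ₀' A Δ₁ h2 with ⟨l, h3, h4⟩ | ⟨l, h3, h4⟩
      · exact Or.inl ⟨l, by simp [h3], h4⟩
      · exact Or.inr ⟨l, by simp [h3], h4⟩

mutual
theorem scutAdm {V : Type} (A : Fma V) (S : Stp V) (Γ Δ : List (Fma V)) (C : Fma V)
    (f : FocL S Γ A) (g : FocL (some A) Δ C) : Nonempty (FocL S (Γ ++ Δ) C) :=
  match f with
  | FocL.uf f' =>
      match scutAdm A _ _ Δ C f' g with
      | ⟨h⟩ => ⟨FocL.uf h⟩
  | FocL.Il f' =>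
      match scutAdm A _ _ Δ C f' g with
      | ⟨h⟩ => ⟨FocL.Il h⟩
  | FocL.tl f' =>
      match scutAdm A _ _ Δ C f' g with
      | ⟨h⟩ => ⟨FocL.tl h⟩
  | FocL.sw r =>
      match r with
      | FocR.ax => ⟨g⟩
      | FocR.Ir =>
          match g with
          | FocL.Il g' => ⟨g'⟩
          | FocL.sw r' => absurd (focR_stoup_var r') (by rintro ⟨X, hX⟩; cases hX)
      | FocR.tr (Γ := Γ₁) (A := A₁) (Δ := Δ₂) (B := A₂) r₁ g₂ =>
          match g with
          | FocL.tl g' =>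
              match scutAdm A₁ _ _ _ C (FocL.sw r₁) g' with
              | ⟨h₁⟩ =>
                match ccutAdm A₂ Δ₂ S Γ₁ Δ C (Γ₁ ++ A₂ :: Δ) rfl g₂ h₁ with
                | ⟨h₂⟩ => ⟨h₂⟩
          | FocL.sw r' => absurd (focR_stoup_var r') (by rintro ⟨X, hX⟩; cases hX)
termination_by (sizeOf A, hL f + hL g)
decreasing_by
  all_goals simp only [hL, hR]
  all_goals first
    | (apply Prod.Lex.left; simp only [Fma.tens.sizeOf_spec]; omega)
    | (apply Prod.Lex.right; omega)

theorem ccutAdm {V : Type} (A : Fma V) (Γ : List (Fma V)) (S : Stp V)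
    (Δ₀ Δ₁ : List (Fma V)) (C : Fma V) (Λ : List (Fma V)) (hΛ : Λ = Δ₀ ++ A :: Δ₁)
    (f : FocL none Γ A) (g : FocL S Λ C) :
    Nonempty (FocL S ((Δ₀ ++ Γ) ++ Δ₁) C) :=
  match S, Λ, g, hΛ with
  | _, _, FocL.uf (A := B) (Γ := Γ') g', hΛ => by
      cases Δ₀ with
      | nil =>
        simp only [List.nil_append, List.cons.injEq] at hΛ
        obtain ⟨hB, hΓ'⟩ := hΛ
        obtain ⟨g'', hg''⟩ := castStoup hB hΓ' g'
        obtain ⟨h⟩ := scutAdm A none Γ Δ₁ C f g''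
        exact ⟨h⟩
      | cons B' Δ₀' =>
        simp only [List.cons_append, List.cons.injEq] at hΛ
        obtain ⟨h⟩ := ccutAdm A Γ (some B) Δ₀' Δ₁ C Γ' hΛ.2 f g'
        exact ⟨hΛ.1 ▸ FocL.uf h⟩
  | _, _, FocL.Il g', hΛ => by
      obtain ⟨h⟩ := ccutAdm A Γ _ Δ₀ Δ₁ C _ hΛ f g'
      exact ⟨FocL.Il h⟩
  | _, _, FocL.tl (A := A') (B := B) (Γ := Γ') g', hΛ => by
      obtain ⟨h⟩ := ccutAdm A Γ _ (B :: Δ₀) Δ₁ C _ (by rw [hΛ]; rfl) f g'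
      exact ⟨FocL.tl h⟩
  | _, _, FocL.sw r, hΛ =>
      match r, hΛ with
      | FocR.ax, hΛ => absurd hΛ (by simp)
      | FocR.Ir, hΛ => absurd hΛ (by simp)
      | FocR.tr (Γ := Γ₁) (A := A₁) (Δ := Δ₂) (B := A₂) r₁ g₂, hΛ => by
          rcases splitList Γ₁ Δ₂ Δ₀ A Δ₁ hΛ with ⟨l, h1, h2⟩ | ⟨l, h1, h2⟩
          · -- A occurs in Γ₁
            obtain ⟨h⟩ := ccutAdm A Γ _ Δ₀ l A₁ Γ₁ h1 f (FocL.sw r₁)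
            have h' := tensRAdm h g₂
            rw [h2, show (Δ₀ ++ Γ) ++ (l ++ Δ₂) = ((Δ₀ ++ Γ) ++ l) ++ Δ₂ by simp]
            exact ⟨h'⟩
          · -- A occurs in Δ₂
            obtain ⟨h⟩ := ccutAdm A Γ none l Δ₁ A₂ Δ₂ h2 f g₂
            have h' := tensRAdm (FocL.sw r₁) h
            rw [h1, show ((Γ₁ ++ l) ++ Γ) ++ Δ₁ = Γ₁ ++ ((l ++ Γ) ++ Δ₁) by simp]
            exact ⟨h'⟩
termination_by (sizeOf A, hL f + hL g)
decreasing_by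
  all_goals simp only [hL, hR]
  all_goals first
    | (apply Prod.Lex.left; simp only [Fma.tens.sizeOf_spec]; omega)
    | (apply Prod.Lex.right; omega)
end

/-- Focusing completeness: every derivation of `S ∣ Γ ⟶ C` in the skew monoidal
sequent calculus yields a focused derivation of `S ∣ Γ ⟶_L C`. -/
theorem statement14 (V : Type) (S : Stp V) (Γ : List (Fma V)) (C : Fma V)
    (f : SeqD S Γ C) : Nonempty (FocL S Γ C) := by
  induction f with
  | ax => exact ⟨axAdm _⟩
  | uf _ ih => obtain ⟨h⟩ := ih; exact ⟨FocL.uf h⟩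
  | Il _ ih => obtain ⟨h⟩ := ih; exact ⟨FocL.Il h⟩
  | Ir => exact ⟨FocL.sw FocR.Ir⟩
  | tl _ ih => obtain ⟨h⟩ := ih; exact ⟨FocL.tl h⟩
  | tr _ _ ih1 ih2 =>
    obtain ⟨h1⟩ := ih1; obtain ⟨h2⟩ := ih2
    exact ⟨tensRAdm h1 h2⟩
  | scut _ _ ih1 ih2 =>
    obtain ⟨h1⟩ := ih1; obtain ⟨h2⟩ := ih2
    exact scutAdm _ _ _ _ _ h1 h2
  | ccut _ _ ih1 ih2 =>
    obtain ⟨h1⟩ := ih1; obtain ⟨h2⟩ := ih2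
    exact ccutAdm _ _ _ _ _ _ _ rfl h1 h2
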